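/- For integers $m \geq 0$ define $k_m(t) = (-1)^{m+1}\,\frac{2\,\Gamma\!\left(m+\tfrac{5}{2}\right)}{\sqrt{\pi}\,\Gamma(m+1)}\,t\,P_m^{(0,3/2)}(2t^2-1)$. Then for all $t \in \mathbb{R}$, $k_m$ satisfies the second-order differential equation $$t^2(1-t^2)^2\,\frac{d^2}{dt^2}k_m(t) + 2(1-2t^2)\,t\,(1-t^2)\,\frac{d}{dt}k_m(t) - \Bigl[2(m+2)(2m+1)\,t^4 - 2(2m+3)(m+1)\,t^2 + 2\Bigr]k_m(t) = 0.$$ -/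

import Mathlib

open Real Filter Finset

noncomputable def poch (a : ℝ) (k : ℕ) : ℝ := (ascPochhammer ℝ k).eval a

/-- Jacobi polynomial `P_k^{(α,β)}(x) = ((α+1)_k / k!) ₂F₁(-k, k+α+β+1; α+1; (1-x)/2)`. -/
noncomputable def jacobiP (k : ℕ) (α β : ℝ) (x : ℝ) : ℝ :=
  (poch (α + 1) k / (Nat.factorial k : ℝ)) *
    ∑ i ∈ Finset.range (k + 1),
      poch (-(k : ℝ)) i * poch ((k : ℝ) + α + β + 1) i /
        (poch (α + 1) i * (Nat.factorial i : ℝ)) * ((1 - x) / 2) ^ i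

/-- The kernel `k_m(t)` for the first derivative. -/
noncomputable def km (m : ℕ) (t : ℝ) : ℝ :=
  (-1:ℝ)^(m+1) * (2 * Real.Gamma ((m:ℝ) + 5/2) /
      (Real.sqrt Real.pi * Real.Gamma ((m:ℝ) + 1))) *
    t * jacobiP m 0 (3/2) (2*t^2 - 1)

/-! ### Auxiliary definitions -/

noncomputable def Cm (m : ℕ) : ℝ :=
  (-1:ℝ)^(m+1) * (2 * Real.Gamma ((m:ℝ) + 5/2) /
      (Real.sqrt Real.pi * Real.Gamma ((m:ℝ) + 1)))

noncomputable def bcoef (m i : ℕ) : ℝ :=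
  poch (-(m:ℝ)) i * poch ((m:ℝ) + 5/2) i / (poch 1 i * (Nat.factorial i : ℝ))

/-- clean form of the first derivative of `t * (1-t^2)^i` -/
noncomputable def d1 (i : ℕ) (t : ℝ) : ℝ :=
  (1 - t^2)^i - 2*(i:ℝ)*t^2*(1 - t^2)^(i-1)

/-- clean form of the second derivative of `t * (1-t^2)^i` -/
noncomputable def d2 (i : ℕ) (t : ℝ) : ℝ :=
  -6*(i:ℝ)*t*(1 - t^2)^(i-1) + 4*(i:ℝ)*((i-1 : ℕ):ℝ)*t^3*(1 - t^2)^(i-1-1)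

lemma poch_succ (a : ℝ) (k : ℕ) : poch a (k+1) = poch a k * (a + k) := by
  simp [poch, ascPochhammer_succ_right]

lemma poch_zero (a : ℝ) : poch a 0 = 1 := by simp [poch]

lemma poch_one_eq (k : ℕ) : poch 1 k = (Nat.factorial k : ℝ) := by
  induction k with
  | zero => simp [poch_zero]
  | succ n ih =>
      rw [poch_succ, ih, Nat.factorial_succ]
      push_cast
      ring

lemma bcoef_top (m : ℕ) : bcoef m (m+1) = 0 := by
  unfold bcoef
  rw [poch_succ]
  simp

lemma bcoef_succ (m i : ℕ) :
    bcoef m (i+1) = ((i:ℝ) - m) * ((m:ℝ) + i + 5/2) * bcoef m i / ((i:ℝ)+1)^2 := by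
  unfold bcoef
  rw [poch_succ, poch_succ, poch_one_eq, poch_one_eq, Nat.factorial_succ]
  have h1 : (Nat.factorial i : ℝ) ≠ 0 := Nat.cast_ne_zero.2 (Nat.factorial_ne_zero i)
  have h2 : ((i:ℝ) + 1) ≠ 0 := by positivity
  push_cast
  field_simp
  ring

lemma km_eq (m : ℕ) (t : ℝ) :
    km m t = ∑ i ∈ Finset.range (m+1), Cm m * bcoef m i * (t * (1 - t^2)^i) := by
  have h1 : (0:ℝ) + 1 = 1 := by norm_num
  have h2 : (m:ℝ) + 0 + 3/2 + 1 = (m:ℝ) + 5/2 := by ring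
  have h3 : (1 - (2*t^2 - 1))/2 = 1 - t^2 := by ring
  have hf : (Nat.factorial m : ℝ) ≠ 0 := Nat.cast_ne_zero.2 (Nat.factorial_ne_zero m)
  unfold km jacobiP Cm bcoef
  rw [h1, h2, h3, poch_one_eq, div_self hf]
  rw [one_mul, Finset.mul_sum]
  apply Finset.sum_congr rfl
  intro i _
  ring

lemma hasDerivAt_inner (i : ℕ) (t : ℝ) :
    HasDerivAt (fun x : ℝ => 1 - x^2) (-(2*t)) t := by
  simpa using ((hasDerivAt_pow 2 t).const_sub 1)

lemma hasDerivAt_d0 (i : ℕ) (t : ℝ) :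
    HasDerivAt (fun x : ℝ => x * (1 - x^2)^i) (d1 i t) t := by
  have h := (hasDerivAt_id t).mul ((hasDerivAt_inner i t).pow i)
  refine h.congr_deriv ?_
  unfold d1
  simp only [id_eq, Pi.pow_apply]
  ring

lemma hasDerivAt_d1 (i : ℕ) (t : ℝ) :
    HasDerivAt (fun x : ℝ => d1 i x) (d2 i t) t := by
  have h1 := (hasDerivAt_inner i t).pow i
  have h2 : HasDerivAt (fun x : ℝ => 2*(i:ℝ)*x^2) (2*(i:ℝ)*(2*t)) t := by
    have h := (hasDerivAt_pow 2 t).const_mul (2*(i:ℝ))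
    norm_num at h
    convert h using 1 <;> norm_num
  have h3 := h2.mul ((hasDerivAt_inner i t).pow (i-1))
  have h := h1.sub h3
  refine h.congr_deriv ?_
  unfold d2
  simp only [Pi.pow_apply]
  ring

lemma hasDerivAt_km (m : ℕ) (t : ℝ) :
    HasDerivAt (km m)
      (∑ i ∈ Finset.range (m+1), Cm m * bcoef m i * d1 i t) t := by
  have : km m = fun t => ∑ i ∈ Finset.range (m+1), Cm m * bcoef m i * (t * (1 - t^2)^i) :=
    funext (km_eq m)
  rw [this]
  apply HasDerivAt.fun_sum
  intro i _
  exact (hasDerivAt_d0 i t).const_mul _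

lemma deriv_km (m : ℕ) :
    deriv (km m) = fun t => ∑ i ∈ Finset.range (m+1), Cm m * bcoef m i * d1 i t :=
  funext fun t => (hasDerivAt_km m t).deriv

lemma deriv2_km (m : ℕ) (t : ℝ) :
    iteratedDeriv 2 (km m) t = ∑ i ∈ Finset.range (m+1), Cm m * bcoef m i * d2 i t := by
  rw [show (2:ℕ) = 1 + 1 from rfl, iteratedDeriv_succ, iteratedDeriv_one, deriv_km]
  have h : HasDerivAt (fun t => ∑ i ∈ Finset.range (m+1), Cm m * bcoef m i * d1 i t)
      (∑ i ∈ Finset.range (m+1), Cm m * bcoef m i * d2 i t) t := by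
    apply HasDerivAt.fun_sum
    intro i _
    exact (hasDerivAt_d1 i t).const_mul _
  exact h.deriv

/-- The telescoping term. -/
noncomputable def Gt (m : ℕ) (t : ℝ) (i : ℕ) : ℝ :=
  4*(i:ℝ)^2 * bcoef m i * (1 - t^2)^i

lemma key (m i : ℕ) (t : ℝ) :
    t^2 * (1 - t^2)^2 * (bcoef m i * d2 i t)
      + 2 * (1 - 2*t^2) * t * (1 - t^2) * (bcoef m i * d1 i t)
      - (2*((m:ℝ) + 2)*(2*(m:ℝ) + 1)*t^4 - 2*(2*(m:ℝ) + 3)*((m:ℝ) + 1)*t^2 + 2)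
          * (bcoef m i * (t * (1 - t^2)^i))
      = t^3 * (Gt m t i - Gt m t (i+1)) := by
  unfold Gt d1 d2
  rw [bcoef_succ]
  have h2 : ((i:ℝ) + 1) ≠ 0 := by positivity
  match i with
  | 0 => push_cast; field_simp; ring
  | 1 => push_cast; field_simp; ring
  | (n+2) =>
      simp only [show n+2-1 = n+1 from rfl, show n+2-1-1 = n from rfl,
        show n+2+1 = n+3 from rfl]
      have e3 : (1 - t^2)^(n+2) = (1 - t^2)^n * (1 - t^2)^2 := by ring
      have e4 : (1 - t^2)^(n+1) = (1 - t^2)^n * (1 - t^2) := by ring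
      have e5 : (1 - t^2)^(n+3) = (1 - t^2)^n * (1 - t^2)^3 := by ring
      rw [e3, e4, e5]
      push_cast
      field_simp
      ring

theorem stmt13 (m : ℕ) (t : ℝ) :
    t^2 * (1 - t^2)^2 * iteratedDeriv 2 (km m) t
      + 2 * (1 - 2*t^2) * t * (1 - t^2) * deriv (km m) t
      - (2*((m:ℝ) + 2)*(2*(m:ℝ) + 1)*t^4 - 2*(2*(m:ℝ) + 3)*((m:ℝ) + 1)*t^2 + 2) * km m t
      = 0 := by
  rw [deriv2_km, deriv_km, km_eq]
  rw [Finset.mul_sum, Finset.mul_sum, Finset.mul_sum, ← Finset.sum_add_distrib,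
    ← Finset.sum_sub_distrib]
  have hsum : ∀ i ∈ Finset.range (m+1),
      (t^2 * (1 - t^2)^2 * (Cm m * bcoef m i * d2 i t)
        + 2 * (1 - 2*t^2) * t * (1 - t^2) * (Cm m * bcoef m i * d1 i t)
        - (2*((m:ℝ) + 2)*(2*(m:ℝ) + 1)*t^4 - 2*(2*(m:ℝ) + 3)*((m:ℝ) + 1)*t^2 + 2)
            * (Cm m * bcoef m i * (t * (1 - t^2)^i)))
      = Cm m * (t^3 * (Gt m t i - Gt m t (i+1))) := by
    intro i _
    rw [← key m i t]
    ring
  rw [Finset.sum_congr rfl hsum, ← Finset.mul_sum]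
  have : ∑ i ∈ Finset.range (m+1), t^3 * (Gt m t i - Gt m t (i+1))
      = t^3 * (Gt m t 0 - Gt m t (m+1)) := by
    rw [← Finset.mul_sum, Finset.sum_range_sub']
  rw [this]
  simp [Gt, bcoef_top]
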